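/- Let Ṽ₁, Ṽ₂ ∈ L^{2*}(ℝ^d) and let (λ_{j,n}, x_{j,n}) ∈ ℝ⁺×ℝ^d for j = 1,2 satisfy λ_{2,n}/λ_{1,n} + λ_{1,n}/λ_{2,n} + |x_{1,n}-x_{2,n}|/λ_{1,n} → ∞ as n → ∞. Define Ṽ_{j,n}(x) = λ_{j,n}^{-(d-2)/2} Ṽ_j((x - x_{j,n})/λ_{j,n}). Then ‖Ṽ_{1,n}·Ṽ_{2,n}‖_{L^{2*/2}(ℝ^d)} → 0 as n → ∞. -/

import Mathlib

open Real MeasureTheory Filter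
open scoped ENNReal NNReal

section Stmt8Aux

variable {d : ℕ}


variable {d : ℕ}

noncomputable def prof (d : ℕ) (f : EuclideanSpace ℝ (Fin d) → ℝ) (lam : ℝ)
    (x₀ : EuclideanSpace ℝ (Fin d)) : EuclideanSpace ℝ (Fin d) → ℝ :=
  fun x => lam ^ (-(((d : ℝ) - 2) / 2)) * f (lam⁻¹ • (x - x₀))

lemma map_psi {lam : ℝ} (hlam : 0 < lam) (x₀ : EuclideanSpace ℝ (Fin d)) :
    Measure.map (fun x : EuclideanSpace ℝ (Fin d) => lam⁻¹ • (x - x₀)) volume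
      = ENNReal.ofReal (lam ^ d) • volume := by
  have h1 : (fun x : EuclideanSpace ℝ (Fin d) => lam⁻¹ • (x - x₀))
      = (fun x : EuclideanSpace ℝ (Fin d) => lam⁻¹ • x) ∘ (fun x => x - x₀) := rfl
  rw [h1, ← Measure.map_map (measurable_const_smul _) (measurable_sub_const x₀),
    (measurePreserving_sub_right volume x₀).map_eq,
    Measure.map_addHaar_smul volume (inv_ne_zero hlam.ne')]
  congr 1
  rw [finrank_euclideanSpace, Fintype.card_fin, inv_pow]
  rw [inv_inv, abs_of_pos (pow_pos hlam d)]

lemma psi_meas {lam : ℝ} (x₀ : EuclideanSpace ℝ (Fin d)) :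
    Measurable (fun x : EuclideanSpace ℝ (Fin d) => lam⁻¹ • (x - x₀)) :=
  (measurable_const_smul _).comp (measurable_sub_const x₀)

lemma psi_qmp {lam : ℝ} (hlam : 0 < lam) (x₀ : EuclideanSpace ℝ (Fin d)) :
    Measure.QuasiMeasurePreserving (fun x : EuclideanSpace ℝ (Fin d) => lam⁻¹ • (x - x₀))
      volume volume :=
  ⟨psi_meas x₀, by rw [map_psi hlam x₀]; exact Measure.smul_absolutelyContinuous⟩

lemma eLpNorm_comp_psi (f : EuclideanSpace ℝ (Fin d) → ℝ)
    (hf : AEStronglyMeasurable f (volume : Measure (EuclideanSpace ℝ (Fin d))))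
    {lam : ℝ} (hlam : 0 < lam) (x₀ : EuclideanSpace ℝ (Fin d)) (q : ℝ≥0∞) :
    eLpNorm (fun x => f (lam⁻¹ • (x - x₀))) q volume
      = ENNReal.ofReal (lam ^ d) ^ (1 / q).toReal * eLpNorm f q volume := by
  have hfm : AEStronglyMeasurable f
      (Measure.map (fun x : EuclideanSpace ℝ (Fin d) => lam⁻¹ • (x - x₀)) volume) := by
    rw [map_psi hlam x₀]; exact hf.mono_ac Measure.smul_absolutelyContinuous
  have h0 : (ENNReal.ofReal (lam ^ d)) ≠ 0 := (ENNReal.ofReal_pos.mpr (pow_pos hlam d)).ne'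
  calc eLpNorm (fun x => f (lam⁻¹ • (x - x₀))) q volume
      = eLpNorm f q (Measure.map (fun x : EuclideanSpace ℝ (Fin d) => lam⁻¹ • (x - x₀)) volume) :=
        (eLpNorm_map_measure hfm (psi_meas x₀).aemeasurable).symm
    _ = _ := by
        rw [map_psi hlam x₀, eLpNorm_smul_measure_of_ne_zero h0, smul_eq_mul]

lemma prof_aesm (f : EuclideanSpace ℝ (Fin d) → ℝ)
    (hf : AEStronglyMeasurable f (volume : Measure (EuclideanSpace ℝ (Fin d))))
    {lam : ℝ} (hlam : 0 < lam) (x₀ : EuclideanSpace ℝ (Fin d)) :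
    AEStronglyMeasurable (prof d f lam x₀) volume :=
  (hf.comp_quasiMeasurePreserving (psi_qmp hlam x₀)).const_mul _

lemma eLpNorm_prof (f : EuclideanSpace ℝ (Fin d) → ℝ)
    (hf : AEStronglyMeasurable f (volume : Measure (EuclideanSpace ℝ (Fin d))))
    {lam : ℝ} (hlam : 0 < lam) (x₀ : EuclideanSpace ℝ (Fin d)) {a : ℝ} (ha : 0 < a) :
    eLpNorm (prof d f lam x₀) (ENNReal.ofReal a) volume
      = ENNReal.ofReal (lam ^ (-(((d : ℝ) - 2) / 2) + (d : ℝ) / a))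
          * eLpNorm f (ENNReal.ofReal a) volume := by
  have h1 : prof d f lam x₀
      = (lam ^ (-(((d : ℝ) - 2) / 2))) • (fun x => f (lam⁻¹ • (x - x₀))) := rfl
  rw [h1, eLpNorm_const_smul, eLpNorm_comp_psi f hf hlam x₀,
    enorm_eq_ofReal (rpow_pos_of_pos hlam _).le, ← mul_assoc]
  congr 1
  rw [one_div, ENNReal.toReal_inv, ENNReal.toReal_ofReal ha.le,
    ← Real.rpow_natCast lam d, ENNReal.ofReal_rpow_of_pos (rpow_pos_of_pos hlam _),
    ← Real.rpow_mul hlam.le, ← ENNReal.ofReal_mul (rpow_pos_of_pos hlam _).le,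
    ← Real.rpow_add hlam]
  congr 1

lemma eLpNorm_prof_p (hd : 3 ≤ d) (f : EuclideanSpace ℝ (Fin d) → ℝ)
    (hf : AEStronglyMeasurable f (volume : Measure (EuclideanSpace ℝ (Fin d))))
    {lam : ℝ} (hlam : 0 < lam) (x₀ : EuclideanSpace ℝ (Fin d)) :
    eLpNorm (prof d f lam x₀) (ENNReal.ofReal (2 * (d : ℝ) / ((d : ℝ) - 2))) volume
      = eLpNorm f (ENNReal.ofReal (2 * (d : ℝ) / ((d : ℝ) - 2))) volume := by
  have hd3 : (3 : ℝ) ≤ (d : ℝ) := by exact_mod_cast hd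
  have hd2 : (0 : ℝ) < (d : ℝ) - 2 := by linarith
  have hd0 : (0 : ℝ) < (d : ℝ) := by linarith
  have ha : (0 : ℝ) < 2 * (d : ℝ) / ((d : ℝ) - 2) := by positivity
  rw [eLpNorm_prof f hf hlam x₀ ha]
  have : -(((d : ℝ) - 2) / 2) + (d : ℝ) / (2 * (d : ℝ) / ((d : ℝ) - 2)) = 0 := by
    field_simp
    ring
  rw [this, Real.rpow_zero, ENNReal.ofReal_one, one_mul]

lemma eLpNorm_prof_q (hd : 3 ≤ d) (f : EuclideanSpace ℝ (Fin d) → ℝ)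
    (hf : AEStronglyMeasurable f (volume : Measure (EuclideanSpace ℝ (Fin d))))
    {lam : ℝ} (hlam : 0 < lam) (x₀ : EuclideanSpace ℝ (Fin d)) :
    eLpNorm (prof d f lam x₀) (ENNReal.ofReal ((d : ℝ) / ((d : ℝ) - 2))) volume
      = ENNReal.ofReal (lam ^ (((d : ℝ) - 2) / 2))
          * eLpNorm f (ENNReal.ofReal ((d : ℝ) / ((d : ℝ) - 2))) volume := by
  have hd3 : (3 : ℝ) ≤ (d : ℝ) := by exact_mod_cast hd
  have hd2 : (0 : ℝ) < (d : ℝ) - 2 := by linarith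
  have hd0 : (0 : ℝ) < (d : ℝ) := by linarith
  have ha : (0 : ℝ) < (d : ℝ) / ((d : ℝ) - 2) := by positivity
  rw [eLpNorm_prof f hf hlam x₀ ha]
  congr 2
  field_simp
  ring

lemma inv_q_eq (hd : 3 ≤ d) :
    1 / ENNReal.ofReal ((d : ℝ) / ((d : ℝ) - 2))
      = 1 / ENNReal.ofReal (2 * (d : ℝ) / ((d : ℝ) - 2))
        + 1 / ENNReal.ofReal (2 * (d : ℝ) / ((d : ℝ) - 2)) := by
  have hd3 : (3 : ℝ) ≤ (d : ℝ) := by exact_mod_cast hd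
  have hd2 : (0 : ℝ) < (d : ℝ) - 2 := by linarith
  have hd0 : (0 : ℝ) < (d : ℝ) := by linarith
  rw [one_div, one_div, ← ENNReal.ofReal_inv_of_pos (by positivity),
    ← ENNReal.ofReal_inv_of_pos (by positivity), ← ENNReal.ofReal_add (by positivity)
    (by positivity)]
  congr 1
  field_simp
  ring

lemma holder_pq (hd : 3 ≤ d) (f g : EuclideanSpace ℝ (Fin d) → ℝ)
    (hf : AEStronglyMeasurable f (volume : Measure (EuclideanSpace ℝ (Fin d))))
    (hg : AEStronglyMeasurable g (volume : Measure (EuclideanSpace ℝ (Fin d)))) :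
    eLpNorm (fun x => f x * g x) (ENNReal.ofReal ((d : ℝ) / ((d : ℝ) - 2))) volume
      ≤ eLpNorm f (ENNReal.ofReal (2 * (d : ℝ) / ((d : ℝ) - 2))) volume
        * eLpNorm g (ENNReal.ofReal (2 * (d : ℝ) / ((d : ℝ) - 2))) volume := by
  haveI : ENNReal.HolderTriple (ENNReal.ofReal (2 * (d : ℝ) / ((d : ℝ) - 2)))
      (ENNReal.ofReal (2 * (d : ℝ) / ((d : ℝ) - 2))) (ENNReal.ofReal ((d : ℝ) / ((d : ℝ) - 2))) :=
    ⟨by simpa only [one_div] using (inv_q_eq hd).symm⟩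
  have h := eLpNorm_smul_le_mul_eLpNorm (μ := (volume : Measure (EuclideanSpace ℝ (Fin d))))
    (f := g) (φ := f) (p := ENNReal.ofReal (2 * (d : ℝ) / ((d : ℝ) - 2)))
    (q := ENNReal.ofReal (2 * (d : ℝ) / ((d : ℝ) - 2)))
    (r := ENNReal.ofReal ((d : ℝ) / ((d : ℝ) - 2))) hg hf
  exact h

lemma holder_topq (f g : EuclideanSpace ℝ (Fin d) → ℝ)
    (hf : AEStronglyMeasurable f (volume : Measure (EuclideanSpace ℝ (Fin d))))
    (q : ℝ≥0∞) :
    eLpNorm (fun x => f x * g x) q volume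
      ≤ eLpNorm g ∞ volume * eLpNorm f q volume := by
  have h := eLpNorm_smul_le_eLpNorm_top_mul_eLpNorm (μ := (volume : Measure (EuclideanSpace ℝ (Fin d))))
    q hf g
  have he : (fun x => f x * g x) = g • f := by
    funext x; simp [mul_comm]
  rw [he]
  exact h

lemma prof_sup_bound {W : EuclideanSpace ℝ (Fin d) → ℝ} {M : ℝ}
    (hM : ∀ y, ‖W y‖ ≤ M) {l : ℝ} (hl : 0 < l) (y₀ : EuclideanSpace ℝ (Fin d)) :
    eLpNorm (prof d W l y₀) ∞ volume
      ≤ ENNReal.ofReal (l ^ (-(((d : ℝ) - 2) / 2)) * M) := by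
  rw [eLpNorm_exponent_top]
  apply eLpNormEssSup_le_of_ae_bound (C := l ^ (-(((d : ℝ) - 2) / 2)) * M)
  filter_upwards with x
  have : ‖prof d W l y₀ x‖ = l ^ (-(((d : ℝ) - 2) / 2)) * ‖W (l⁻¹ • (x - y₀))‖ := by
    simp only [prof, norm_mul, Real.norm_eq_abs (l ^ (-(((d : ℝ) - 2) / 2))),
      abs_of_pos (rpow_pos_of_pos hl _)]
  rw [this]
  exact mul_le_mul_of_nonneg_left (hM _) (rpow_pos_of_pos hl _).le

lemma case_scale (hd : 3 ≤ d) (W₁ W₂ : EuclideanSpace ℝ (Fin d) → ℝ)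
    (hW₁ : AEStronglyMeasurable W₁ (volume : Measure (EuclideanSpace ℝ (Fin d))))
    {M₂ : ℝ} (hM₂0 : 0 ≤ M₂) (hM₂ : ∀ y, ‖W₂ y‖ ≤ M₂)
    {l₁ l₂ : ℝ} (h₁ : 0 < l₁) (h₂ : 0 < l₂) (y₁ y₂ : EuclideanSpace ℝ (Fin d)) :
    eLpNorm (fun x => prof d W₁ l₁ y₁ x * prof d W₂ l₂ y₂ x)
        (ENNReal.ofReal ((d : ℝ) / ((d : ℝ) - 2))) volume
      ≤ ENNReal.ofReal ((l₁ / l₂) ^ (((d : ℝ) - 2) / 2) * M₂)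
          * eLpNorm W₁ (ENNReal.ofReal ((d : ℝ) / ((d : ℝ) - 2))) volume := by
  calc eLpNorm (fun x => prof d W₁ l₁ y₁ x * prof d W₂ l₂ y₂ x)
        (ENNReal.ofReal ((d : ℝ) / ((d : ℝ) - 2))) volume
      ≤ eLpNorm (prof d W₂ l₂ y₂) ∞ volume
          * eLpNorm (prof d W₁ l₁ y₁) (ENNReal.ofReal ((d : ℝ) / ((d : ℝ) - 2))) volume :=
        holder_topq _ _ (prof_aesm W₁ hW₁ h₁ y₁) _
    _ ≤ ENNReal.ofReal (l₂ ^ (-(((d : ℝ) - 2) / 2)) * M₂)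
          * (ENNReal.ofReal (l₁ ^ (((d : ℝ) - 2) / 2))
            * eLpNorm W₁ (ENNReal.ofReal ((d : ℝ) / ((d : ℝ) - 2))) volume) := by
        apply mul_le_mul' (prof_sup_bound hM₂ h₂ y₂)
        exact (eLpNorm_prof_q hd W₁ hW₁ h₁ y₁).le
    _ = ENNReal.ofReal ((l₁ / l₂) ^ (((d : ℝ) - 2) / 2) * M₂)
          * eLpNorm W₁ (ENNReal.ofReal ((d : ℝ) / ((d : ℝ) - 2))) volume := by
        rw [← mul_assoc, ← ENNReal.ofReal_mul (by positivity)]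
        congr 2
        rw [Real.div_rpow h₁.le h₂.le, Real.rpow_neg h₂.le, div_eq_mul_inv]
        ring

end Stmt8Aux

/-- if `Ṽ₁, Ṽ₂ ∈ L^{2*}(ℝ^d)` and the scaling/translation parameters
are asymptotically orthogonal, then the product of the rescaled profiles tends
to `0` in `L^{2*/2}`. -/
theorem stmt_8 (d : ℕ) (hd : 3 ≤ d) (hd' : d ≤ 5)
    (V₁ V₂ : EuclideanSpace ℝ (Fin d) → ℝ)
    (hV₁ : MemLp V₁ (ENNReal.ofReal ((2 * (d : ℝ)) / ((d : ℝ) - 2))) volume)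
    (hV₂ : MemLp V₂ (ENNReal.ofReal ((2 * (d : ℝ)) / ((d : ℝ) - 2))) volume)
    (lam₁ lam₂ : ℕ → ℝ) (x₁ x₂ : ℕ → EuclideanSpace ℝ (Fin d))
    (hlam₁ : ∀ n, 0 < lam₁ n) (hlam₂ : ∀ n, 0 < lam₂ n)
    (horth : Tendsto (fun n =>
        lam₂ n / lam₁ n + lam₁ n / lam₂ n + ‖x₁ n - x₂ n‖ / lam₁ n) atTop atTop) :
    Tendsto (fun n => eLpNorm (fun x =>
        ((lam₁ n) ^ (-(((d : ℝ) - 2) / 2)) * V₁ ((lam₁ n)⁻¹ • (x - x₁ n)))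
          * ((lam₂ n) ^ (-(((d : ℝ) - 2) / 2)) * V₂ ((lam₂ n)⁻¹ • (x - x₂ n))))
      (ENNReal.ofReal ((d : ℝ) / ((d : ℝ) - 2))) volume) atTop (nhds 0) := by
  have hd3 : (3 : ℝ) ≤ (d : ℝ) := by exact_mod_cast hd
  have hd2 : (0 : ℝ) < (d : ℝ) - 2 := by linarith
  have hd0 : (0 : ℝ) < (d : ℝ) := by linarith
  have hs : (0 : ℝ) < ((d : ℝ) - 2) / 2 := by linarith
  set p : ℝ≥0∞ := ENNReal.ofReal (2 * (d : ℝ) / ((d : ℝ) - 2)) with hpdef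
  set q : ℝ≥0∞ := ENNReal.ofReal ((d : ℝ) / ((d : ℝ) - 2)) with hqdef
  have hq1 : 1 ≤ q := by
    rw [hqdef, ENNReal.one_le_ofReal, le_div_iff₀ hd2]; linarith
  have hp_ne_top : p ≠ ∞ := ENNReal.ofReal_ne_top
  have hq_ne_top : q ≠ ∞ := ENNReal.ofReal_ne_top
  show Tendsto (fun n => eLpNorm
    (fun x => prof d V₁ (lam₁ n) (x₁ n) x * prof d V₂ (lam₂ n) (x₂ n) x) q volume)
    atTop (nhds 0)
  rw [ENNReal.tendsto_nhds_zero]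
  intro ε hε
  have hη : 0 < min ε 1 := lt_min hε zero_lt_one
  set η := min ε 1 with hηdef
  have hη_top : η ≠ ∞ := ne_top_of_le_ne_top ENNReal.one_ne_top (min_le_right _ _)
  suffices h : ∀ᶠ n in atTop, eLpNorm
      (fun x => prof d V₁ (lam₁ n) (x₁ n) x * prof d V₂ (lam₂ n) (x₂ n) x) q volume ≤ η by
    exact h.mono fun n hn => hn.trans (min_le_left _ _)
  -- first approximation
  have hB₂ : eLpNorm V₂ p volume ≠ ∞ := hV₂.2.ne
  set δ₁ : ℝ≥0∞ := (η / 2) / (eLpNorm V₂ p volume + 1) with hδ₁def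
  have hδ₁0 : δ₁ ≠ 0 := by
    rw [hδ₁def]
    apply (ENNReal.div_pos _ _).ne'
    · exact (ENNReal.div_pos hη.ne' ENNReal.ofNat_ne_top).ne'
    · exact ENNReal.add_ne_top.mpr ⟨hB₂, ENNReal.one_ne_top⟩
  obtain ⟨W₁, hW₁supp, hW₁close, hW₁cont, hW₁mem⟩ :=
    hV₁.exists_hasCompactSupport_eLpNorm_sub_le hp_ne_top hδ₁0
  -- second approximation
  have hB₁ : eLpNorm W₁ p volume ≠ ∞ := hW₁mem.2.ne
  set δ₂ : ℝ≥0∞ := (η / 4) / (eLpNorm W₁ p volume + 1) with hδ₂def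
  have hδ₂0 : δ₂ ≠ 0 := by
    rw [hδ₂def]
    apply (ENNReal.div_pos _ _).ne'
    · exact (ENNReal.div_pos hη.ne' (by norm_num)).ne'
    · exact ENNReal.add_ne_top.mpr ⟨hB₁, ENNReal.one_ne_top⟩
  obtain ⟨W₂, hW₂supp, hW₂close, hW₂cont, hW₂mem⟩ :=
    hV₂.exists_hasCompactSupport_eLpNorm_sub_le hp_ne_top hδ₂0
  -- sup bounds
  obtain ⟨M₁, hM₁⟩ := hW₁cont.bounded_above_of_compact_support hW₁supp
  obtain ⟨M₂, hM₂⟩ := hW₂cont.bounded_above_of_compact_support hW₂supp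
  have hM₁0 : 0 ≤ M₁ := (norm_nonneg _).trans (hM₁ 0)
  have hM₂0 : 0 ≤ M₂ := (norm_nonneg _).trans (hM₂ 0)
  -- support radii
  obtain ⟨R₁', hR₁'⟩ := (hW₁supp : IsCompact (tsupport W₁)).isBounded.subset_closedBall 0
  obtain ⟨R₂', hR₂'⟩ := (hW₂supp : IsCompact (tsupport W₂)).isBounded.subset_closedBall 0
  set R₁ : ℝ := max R₁' 1 with hR₁def
  set R₂ : ℝ := max R₂' 1 with hR₂def
  have hR₁1 : (1 : ℝ) ≤ R₁ := le_max_right _ _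
  have hR₂1 : (1 : ℝ) ≤ R₂ := le_max_right _ _
  have hsupp₁ : tsupport W₁ ⊆ Metric.closedBall 0 R₁ :=
    hR₁'.trans (Metric.closedBall_subset_closedBall (le_max_left _ _))
  have hsupp₂ : tsupport W₂ ⊆ Metric.closedBall 0 R₂ :=
    hR₂'.trans (Metric.closedBall_subset_closedBall (le_max_left _ _))
  -- q-norms of W's
  have hK₁ : eLpNorm W₁ q volume ≠ ∞ :=
    (hW₁cont.memLp_of_hasCompactSupport (p := q) hW₁supp).2.ne
  have hK₂ : eLpNorm W₂ q volume ≠ ∞ :=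
    (hW₂cont.memLp_of_hasCompactSupport (p := q) hW₂supp).2.ne
  -- choice of C₀
  set D : ℝ≥0∞ := ENNReal.ofReal M₁ * eLpNorm W₂ q volume
      + ENNReal.ofReal M₂ * eLpNorm W₁ q volume with hDdef
  have hD_ne_top : D ≠ ∞ := ENNReal.add_ne_top.mpr
    ⟨ENNReal.mul_ne_top ENNReal.ofReal_ne_top hK₂, ENNReal.mul_ne_top ENNReal.ofReal_ne_top hK₁⟩
  have htend : Tendsto (fun t : ℝ => ENNReal.ofReal (t ^ (-(((d : ℝ) - 2) / 2))) * D)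
      atTop (nhds 0) := by
    have h1 : Tendsto (fun t : ℝ => ENNReal.ofReal (t ^ (-(((d : ℝ) - 2) / 2))))
        atTop (nhds 0) := by
      have h2 := (ENNReal.continuous_ofReal.tendsto 0).comp (tendsto_rpow_neg_atTop hs)
      rw [ENNReal.ofReal_zero] at h2
      exact h2
    simpa using ENNReal.Tendsto.mul_const h1 (Or.inr hD_ne_top)
  have hη4 : (0 : ℝ≥0∞) < η / 4 := ENNReal.div_pos hη.ne' (by norm_num)
  obtain ⟨C₀, hC₀mem⟩ := ((eventually_ge_atTop (1 : ℝ)).and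
    (htend.eventually_lt_const hη4)).exists
  obtain ⟨hC₀1, hC₀bound⟩ := hC₀mem
  have hC₀0 : (0 : ℝ) < C₀ := lt_of_lt_of_le zero_lt_one hC₀1
  set C : ℝ := max C₀ ((R₁ + R₂) * (1 + C₀) + 1) with hCdef
  have hCC₀ : C₀ ≤ C := le_max_left _ _
  have hCR : (R₁ + R₂) * (1 + C₀) + 1 ≤ C := le_max_right _ _
  filter_upwards [horth.eventually_ge_atTop (3 * C)] with n hn
  -- abbreviations
  have h₁ : 0 < lam₁ n := hlam₁ n
  have h₂ : 0 < lam₂ n := hlam₂ n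
  -- measurability facts
  have hV₁m := hV₁.1
  have hV₂m := hV₂.1
  have hW₁m : AEStronglyMeasurable W₁ (volume : Measure (EuclideanSpace ℝ (Fin d))) :=
    hW₁cont.aestronglyMeasurable
  have hW₂m : AEStronglyMeasurable W₂ (volume : Measure (EuclideanSpace ℝ (Fin d))) :=
    hW₂cont.aestronglyMeasurable
  have hVW₁m : AEStronglyMeasurable (V₁ - W₁) (volume : Measure (EuclideanSpace ℝ (Fin d))) :=
    hV₁m.sub hW₁m
  have hVW₂m : AEStronglyMeasurable (V₂ - W₂) (volume : Measure (EuclideanSpace ℝ (Fin d))) :=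
    hV₂m.sub hW₂m
  -- decomposition
  have hdecomp : (fun x => prof d V₁ (lam₁ n) (x₁ n) x * prof d V₂ (lam₂ n) (x₂ n) x)
      = (fun x => prof d (V₁ - W₁) (lam₁ n) (x₁ n) x * prof d V₂ (lam₂ n) (x₂ n) x)
        + ((fun x => prof d W₁ (lam₁ n) (x₁ n) x * prof d (V₂ - W₂) (lam₂ n) (x₂ n) x)
          + fun x => prof d W₁ (lam₁ n) (x₁ n) x * prof d W₂ (lam₂ n) (x₂ n) x) := by
    funext x
    simp only [prof, Pi.add_apply, Pi.sub_apply]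
    ring
  -- term 1 bound
  have hT1 : eLpNorm
      (fun x => prof d (V₁ - W₁) (lam₁ n) (x₁ n) x * prof d V₂ (lam₂ n) (x₂ n) x) q volume
      ≤ η / 2 := by
    refine le_trans (holder_pq hd (prof d (V₁ - W₁) (lam₁ n) (x₁ n))
      (prof d V₂ (lam₂ n) (x₂ n)) (prof_aesm _ hVW₁m h₁ _) (prof_aesm _ hV₂m h₂ _)) ?_
    rw [eLpNorm_prof_p hd _ hVW₁m h₁, eLpNorm_prof_p hd _ hV₂m h₂]
    refine le_trans (mul_le_mul' hW₁close (le_add_right (le_refl (eLpNorm V₂ p volume)) : eLpNorm V₂ p volume ≤ eLpNorm V₂ p volume + 1)) ?_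
    rw [hδ₁def]
    exact le_of_eq (ENNReal.div_mul_cancel
      (fun h => one_ne_zero (add_eq_zero.mp h).2)
      (ENNReal.add_ne_top.mpr ⟨hB₂, ENNReal.one_ne_top⟩))
  -- term 2 bound
  have hT2 : eLpNorm
      (fun x => prof d W₁ (lam₁ n) (x₁ n) x * prof d (V₂ - W₂) (lam₂ n) (x₂ n) x) q volume
      ≤ η / 4 := by
    refine le_trans (holder_pq hd (prof d W₁ (lam₁ n) (x₁ n))
      (prof d (V₂ - W₂) (lam₂ n) (x₂ n)) (prof_aesm _ hW₁m h₁ _) (prof_aesm _ hVW₂m h₂ _)) ?_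
    rw [eLpNorm_prof_p hd _ hW₁m h₁, eLpNorm_prof_p hd _ hVW₂m h₂]
    refine le_trans (mul_le_mul' (le_add_right (le_refl (eLpNorm W₁ p volume)) : eLpNorm W₁ p volume ≤ eLpNorm W₁ p volume + 1) hW₂close) ?_
    rw [hδ₂def, mul_comm]
    exact le_of_eq (ENNReal.div_mul_cancel
      (fun h => one_ne_zero (add_eq_zero.mp h).2)
      (ENNReal.add_ne_top.mpr ⟨hB₁, ENNReal.one_ne_top⟩))
  -- term 3 bound, case analysis
  have hT3 : eLpNorm
      (fun x => prof d W₁ (lam₁ n) (x₁ n) x * prof d W₂ (lam₂ n) (x₂ n) x) q volume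
      ≤ η / 4 := by
    rcases le_or_gt C₀ (lam₂ n / lam₁ n) with hc1 | hc1
    · -- lam₂ much bigger
      have hratio : lam₁ n / lam₂ n ≤ C₀⁻¹ := by
        rw [← inv_div]
        exact inv_anti₀ hC₀0 hc1
      refine le_trans (case_scale hd W₁ W₂ hW₁m hM₂0 hM₂ h₁ h₂ (x₁ n) (x₂ n))
        (le_trans ?_ hC₀bound.le)
      have hre : (lam₁ n / lam₂ n) ^ (((d : ℝ) - 2) / 2) * M₂
          ≤ C₀ ^ (-(((d : ℝ) - 2) / 2)) * M₂ := by
        apply mul_le_mul_of_nonneg_right _ hM₂0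
        rw [Real.rpow_neg hC₀0.le, ← Real.inv_rpow hC₀0.le]
        exact Real.rpow_le_rpow (by positivity) hratio hs.le
      refine le_trans (mul_le_mul' (ENNReal.ofReal_le_ofReal hre) le_rfl) ?_
      rw [ENNReal.ofReal_mul (by positivity), mul_assoc, hDdef]
      exact mul_le_mul' le_rfl le_add_self
    · rcases le_or_gt C₀ (lam₁ n / lam₂ n) with hc2 | hc2
      · -- lam₁ much bigger
        have hratio : lam₂ n / lam₁ n ≤ C₀⁻¹ := by
          rw [← inv_div]
          exact inv_anti₀ hC₀0 hc2
        have hcomm : (fun x => prof d W₁ (lam₁ n) (x₁ n) x * prof d W₂ (lam₂ n) (x₂ n) x)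
            = fun x => prof d W₂ (lam₂ n) (x₂ n) x * prof d W₁ (lam₁ n) (x₁ n) x := by
          funext x; ring
        rw [hcomm]
        refine le_trans (case_scale hd W₂ W₁ hW₂m hM₁0 hM₁ h₂ h₁ (x₂ n) (x₁ n))
          (le_trans ?_ hC₀bound.le)
        have hre : (lam₂ n / lam₁ n) ^ (((d : ℝ) - 2) / 2) * M₁
            ≤ C₀ ^ (-(((d : ℝ) - 2) / 2)) * M₁ := by
          apply mul_le_mul_of_nonneg_right _ hM₁0
          rw [Real.rpow_neg hC₀0.le, ← Real.inv_rpow hC₀0.le]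
          exact Real.rpow_le_rpow (by positivity) hratio hs.le
        refine le_trans (mul_le_mul' (ENNReal.ofReal_le_ofReal hre) le_rfl) ?_
        rw [ENNReal.ofReal_mul (by positivity), mul_assoc, hDdef]
        exact mul_le_mul' le_rfl le_self_add
      · -- separated centers
        have hsep : lam₁ n * R₁ + lam₂ n * R₂ < ‖x₁ n - x₂ n‖ := by
          have hl₂ : lam₂ n < C₀ * lam₁ n := (div_lt_iff₀ h₁).mp hc1
          have hnx : (R₁ + R₂) * (1 + C₀) + 1 ≤ ‖x₁ n - x₂ n‖ / lam₁ n := by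
            have : lam₂ n / lam₁ n + lam₁ n / lam₂ n < 2 * C₀ := by linarith
            have h3C : 3 * C ≤ lam₂ n / lam₁ n + lam₁ n / lam₂ n + ‖x₁ n - x₂ n‖ / lam₁ n := hn
            linarith
          have hkey := (le_div_iff₀ h₁).mp hnx
          nlinarith [mul_lt_mul_of_pos_right hl₂ (show (0:ℝ) < R₂ by linarith),
            mul_nonneg (mul_nonneg hC₀0.le h₁.le) (show (0:ℝ) ≤ R₁ by linarith),
            mul_nonneg h₁.le (show (0:ℝ) ≤ R₂ by linarith), h₁]
        have hzero : (fun x => prof d W₁ (lam₁ n) (x₁ n) x * prof d W₂ (lam₂ n) (x₂ n) x)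
            = fun _ => (0 : ℝ) := by
          funext x
          by_contra hne
          have hne1 : W₁ ((lam₁ n)⁻¹ • (x - x₁ n)) ≠ 0 := by
            intro h; apply hne; simp [prof, h]
          have hne2 : W₂ ((lam₂ n)⁻¹ • (x - x₂ n)) ≠ 0 := by
            intro h; apply hne; simp [prof, h]
          have hb1 : ‖x - x₁ n‖ ≤ lam₁ n * R₁ := by
            have hmem := hsupp₁ (subset_tsupport W₁ hne1)
            rw [Metric.mem_closedBall, dist_zero_right, norm_smul, Real.norm_eq_abs,
              abs_of_pos (inv_pos.mpr h₁)] at hmem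
            calc ‖x - x₁ n‖ = lam₁ n * ((lam₁ n)⁻¹ * ‖x - x₁ n‖) := by
                  field_simp
              _ ≤ lam₁ n * R₁ := mul_le_mul_of_nonneg_left hmem h₁.le
          have hb2 : ‖x - x₂ n‖ ≤ lam₂ n * R₂ := by
            have hmem := hsupp₂ (subset_tsupport W₂ hne2)
            rw [Metric.mem_closedBall, dist_zero_right, norm_smul, Real.norm_eq_abs,
              abs_of_pos (inv_pos.mpr h₂)] at hmem
            calc ‖x - x₂ n‖ = lam₂ n * ((lam₂ n)⁻¹ * ‖x - x₂ n‖) := by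
                  field_simp
              _ ≤ lam₂ n * R₂ := mul_le_mul_of_nonneg_left hmem h₂.le
          have htri : ‖x₁ n - x₂ n‖ ≤ ‖x - x₁ n‖ + ‖x - x₂ n‖ := by
            calc ‖x₁ n - x₂ n‖ = ‖(x - x₂ n) - (x - x₁ n)‖ := by abel_nf
            _ ≤ ‖x - x₂ n‖ + ‖x - x₁ n‖ := norm_sub_le _ _
            _ = ‖x - x₁ n‖ + ‖x - x₂ n‖ := by ring
          linarith
        rw [hzero]
        simpa using (zero_le (η / 4))
  -- combine
  rw [hdecomp]
  have h44 : η / 4 + η / 4 = η / 2 := by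
    rw [ENNReal.div_add_div_same, ← two_mul, show (4 : ℝ≥0∞) = 2 * 2 by norm_num,
      ENNReal.mul_div_mul_left _ _ (by norm_num) (by norm_num)]
  have hstep1 := eLpNorm_add_le (μ := (volume : Measure (EuclideanSpace ℝ (Fin d))))
    (p := q)
    (f := fun x => prof d (V₁ - W₁) (lam₁ n) (x₁ n) x * prof d V₂ (lam₂ n) (x₂ n) x)
    (g := (fun x => prof d W₁ (lam₁ n) (x₁ n) x * prof d (V₂ - W₂) (lam₂ n) (x₂ n) x)
      + fun x => prof d W₁ (lam₁ n) (x₁ n) x * prof d W₂ (lam₂ n) (x₂ n) x)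
    ((prof_aesm _ hVW₁m h₁ _).mul (prof_aesm _ hV₂m h₂ _))
    (((prof_aesm _ hW₁m h₁ _).mul (prof_aesm _ hVW₂m h₂ _)).add
      ((prof_aesm _ hW₁m h₁ _).mul (prof_aesm _ hW₂m h₂ _))) hq1
  have hstep2 := eLpNorm_add_le (μ := (volume : Measure (EuclideanSpace ℝ (Fin d))))
    (p := q)
    (f := fun x => prof d W₁ (lam₁ n) (x₁ n) x * prof d (V₂ - W₂) (lam₂ n) (x₂ n) x)
    (g := fun x => prof d W₁ (lam₁ n) (x₁ n) x * prof d W₂ (lam₂ n) (x₂ n) x)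
    ((prof_aesm _ hW₁m h₁ _).mul (prof_aesm _ hVW₂m h₂ _))
    ((prof_aesm _ hW₁m h₁ _).mul (prof_aesm _ hW₂m h₂ _)) hq1
  refine le_trans hstep1 (le_trans (add_le_add hT1 (le_trans hstep2 (add_le_add hT2 hT3))) ?_)
  rw [h44, ENNReal.add_halves]
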